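/- arXiv:math/0601541 — 2 statements merged into one kernel-verified Lean document; each statement's English description precedes it below -/
import Mathlib

section
/- Let H be a bialgebra over a field k that is also a graded coalgebra H = ⊕_{n≥0} H_n. If U and V are left H-modules with finite cycles, then the tensor product U ⊗ V, with the diagonal H-action h·(x⊗y) = Σ h₁·x ⊗ h₂·y, is again a left H-module with finite cycles; more precisely, for x ∈ U with bound n_x and y ∈ V with bound n_y, one may take n_{x⊗y} = 2n_x + 2n_y, i.e. H_i·(x⊗y) = 0 for all i > 2n_x + 2n_y. -/
/-!
STATEMENT 0.  Let `H` be a bialgebra over a field `k` which is also a graded coalgebra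
`H = ⊕ₙ Hₙ`.  If `U` and `V` are left `H`-modules with finite cycles, then `U ⊗ V`
with the diagonal action `h • (x ⊗ y) = Σ h₁•x ⊗ h₂•y` is again an `H`-module with
finite cycles; more precisely for `x` with bound `n_x` and `y` with bound `n_y` one may
take `n_{x⊗y} = 2n_x + 2n_y`.
-/

open TensorProduct

noncomputable section

namespace LQTPaper

variable (k : Type*) [Field k]

/-- The image of `U ⊗ V` inside `H ⊗[k] H'`, for submodules `U ⊆ H`, `V ⊆ H'`. -/
def tsub {H H' : Type*} [AddCommGroup H] [Module k H] [AddCommGroup H'] [Module k H']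
    (U : Submodule k H) (V : Submodule k H') : Submodule k (H ⊗[k] H') :=
  LinearMap.range (TensorProduct.map U.subtype V.subtype)

/-- The action of `H` on an `H`-module `M`, as a `k`-linear map `H →ₗ[k] (M →ₗ[k] M)`. -/
def act (H M : Type*) [Ring H] [Algebra k H] [AddCommGroup M] [Module k M]
    [Module H M] [IsScalarTower k H M] : H →ₗ[k] M →ₗ[k] M :=
  (Algebra.lsmul k k M : H →ₐ[k] Module.End k M).toLinearMap

/-- A bialgebra `H` which is a graded coalgebra `H = ⊕ₙ Hₙ`. -/
structure CoalgebraGrading (H : Type*) [Ring H] [Bialgebra k H] where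
  grade : ℕ → Submodule k H
  internal : DirectSum.IsInternal grade
  comul_mem : ∀ n, ∀ x ∈ grade n,
    Coalgebra.comul (R := k) x ∈
      ⨆ p : {p : ℕ × ℕ // p.1 + p.2 = n}, tsub k (grade p.1.1) (grade p.1.2)
  counit_zero : ∀ n, 0 < n → ∀ x ∈ grade n, Coalgebra.counit (R := k) x = 0

variable {H : Type*} [Ring H] [Bialgebra k H]

/-- `n` is a bound for the cycle of `x`:  `H_i • x = 0` for all `i > n`. -/
def CoalgebraGrading.IsBound (G : CoalgebraGrading k H) {M : Type*} [AddCommGroup M]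
    [Module k M] [Module H M] [IsScalarTower k H M] (x : M) (n : ℕ) : Prop :=
  ∀ i, n < i → ∀ h ∈ G.grade i, h • x = 0

/-- `M` is an `H`-module with finite cycles. -/
def CoalgebraGrading.FinCycles (G : CoalgebraGrading k H) (M : Type*) [AddCommGroup M]
    [Module k M] [Module H M] [IsScalarTower k H M] : Prop :=
  ∀ x : M, ∃ n, G.IsBound k x n

variable {U V : Type*} [AddCommGroup U] [Module k U] [Module H U] [IsScalarTower k H U]
  [AddCommGroup V] [Module k V] [Module H V] [IsScalarTower k H V]

/-- The diagonal action of `H` on `U ⊗ V`:  `h • (x ⊗ y) = Σ h₁•x ⊗ h₂•y`. -/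
def diagAct : H →ₗ[k] (U ⊗[k] V) →ₗ[k] (U ⊗[k] V) :=
  (TensorProduct.homTensorHomMap (RingHom.id k) U V U V).comp
    ((TensorProduct.map (act k H U) (act k H V)).comp (Coalgebra.comul (R := k)))

/-- **Lemma 3.1.**  If `U` and `V` are `H`-modules with finite cycles, then so is
`U ⊗ V` with the diagonal action; moreover `2n_x + 2n_y` is a bound for `x ⊗ y`. -/
theorem tensor_finCycles (G : CoalgebraGrading k H)
    (hU : G.FinCycles k U) (hV : G.FinCycles k V) :
    (∀ t : U ⊗[k] V, ∃ n : ℕ, ∀ i, n < i → ∀ h ∈ G.grade i, diagAct k h t = 0) ∧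
    (∀ (x : U) (y : V) (nx ny : ℕ), G.IsBound k x nx → G.IsBound k y ny →
      ∀ i, 2 * nx + 2 * ny < i → ∀ h ∈ G.grade i, diagAct k h (x ⊗ₜ[k] y) = 0) := by
  have key : ∀ (x : U) (y : V) (nx ny : ℕ), G.IsBound k x nx → G.IsBound k y ny →
      ∀ i, nx + ny < i → ∀ h ∈ G.grade i, diagAct k h (x ⊗ₜ[k] y) = 0 := by
    intro x y nx ny hx hy i hi h hh
    set L : H ⊗[k] H →ₗ[k] U ⊗[k] V :=
      (LinearMap.applyₗ (x ⊗ₜ[k] y)).comp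
        ((TensorProduct.homTensorHomMap (RingHom.id k) U V U V).comp
          (TensorProduct.map (act k H U) (act k H V))) with hLdef
    have hdiag : diagAct k h (x ⊗ₜ[k] y) = L (Coalgebra.comul (R := k) h) := rfl
    have hsub : (⨆ p : {p : ℕ × ℕ // p.1 + p.2 = i},
        tsub k (G.grade p.1.1) (G.grade p.1.2)) ≤ LinearMap.ker L := by
      refine iSup_le fun p => ?_
      rintro s ⟨t, rfl⟩
      induction t with
      | zero => simp
      | tmul a b =>
        have hab : p.1.1 + p.1.2 = i := p.2
        rw [LinearMap.mem_ker]
        have hform : L (TensorProduct.map (G.grade p.1.1).subtype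
            (G.grade p.1.2).subtype ((a : G.grade p.1.1) ⊗ₜ[k] b)) =
            (act k H U (a : H) x) ⊗ₜ[k] (act k H V (b : H) y) := by
          simp [hLdef, LinearMap.applyₗ]
          rfl
        rw [hform]
        rcases Nat.lt_or_ge nx p.1.1 with h1 | h1
        · have hz : act k H U (a : H) x = 0 := by
            simpa [act] using hx p.1.1 h1 a a.2
          rw [hz, TensorProduct.zero_tmul]
        · have h2 : ny < p.1.2 := by omega
          have hz : act k H V (b : H) y = 0 := by
            simpa [act] using hy p.1.2 h2 b b.2
          rw [hz, TensorProduct.tmul_zero]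
      | add u v hu hv =>
        rw [map_add]
        exact add_mem hu hv
    rw [hdiag, ← LinearMap.mem_ker]
    exact hsub (G.comul_mem i h hh)
  constructor
  · intro t
    induction t with
    | zero => exact ⟨0, fun i _ h _ => map_zero _⟩
    | tmul x y =>
      obtain ⟨nx, hx⟩ := hU x
      obtain ⟨ny, hy⟩ := hV y
      exact ⟨nx + ny, fun i hi h hh => key x y nx ny hx hy i hi h hh⟩
    | add u v hu hv =>
      obtain ⟨n1, h1⟩ := hu
      obtain ⟨n2, h2⟩ := hv
      refine ⟨max n1 n2, fun i hi h hh => ?_⟩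
      rw [map_add, h1 i (lt_of_le_of_lt (le_max_left _ _) hi) h hh,
        h2 i (lt_of_le_of_lt (le_max_right _ _) hi) h hh, add_zero]
  · intro x y nx ny hx hy i hi h hh
    exact key x y nx ny hx hy i (by omega) h hh


end LQTPaper
end
end

section
/- If H = ⊕_{n≥0} H_n is a graded bialgebra over a field k (graded as both algebra and coalgebra) whose degree-zero component H_0 is a Hopf algebra with invertible antipode, then H is a Hopf algebra with invertible antipode. -/
/-!
STATEMENT 10.  If `H = ⊕ₙ Hₙ` is a graded bialgebra over a field `k` (graded as algebra
and as coalgebra) whose degree-zero component `H₀` is a Hopf algebra with invertible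
antipode, then `H` is a Hopf algebra with invertible antipode.
-/

open TensorProduct

noncomputable section

namespace LQTPaper

variable (k : Type*) [Field k]

/-- A graded bialgebra structure:  a grading making `H` simultaneously a graded algebra
and a graded coalgebra. -/
structure BialgGrading (H : Type*) [Ring H] [Bialgebra k H] where
  grade : ℕ → Submodule k H
  internal : DirectSum.IsInternal grade
  one_mem : (1 : H) ∈ grade 0
  mul_mem : ∀ i j, ∀ x ∈ grade i, ∀ y ∈ grade j, x * y ∈ grade (i + j)
  comul_mem : ∀ n, ∀ x ∈ grade n,
    Coalgebra.comul (R := k) x ∈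
      ⨆ p : {p : ℕ × ℕ // p.1 + p.2 = n}, tsub k (grade p.1.1) (grade p.1.2)
  counit_zero : ∀ n, 0 < n → ∀ x ∈ grade n, Coalgebra.counit (R := k) x = 0

variable {H : Type*} [Ring H] [Bialgebra k H]

/-- `s` is an antipode for the elements of `X`:  `Σ s(x₁)x₂ = ε(x)1 = Σ x₁s(x₂)`
for `x ∈ X`. -/
def IsAntipodeOn (s : H →ₗ[k] H) (X : Submodule k H) : Prop :=
  ∀ x ∈ X,
    (LinearMap.mul' k H) ((TensorProduct.map s LinearMap.id) (Coalgebra.comul (R := k) x))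
      = Coalgebra.counit (R := k) x • (1 : H) ∧
    (LinearMap.mul' k H) ((TensorProduct.map LinearMap.id s) (Coalgebra.comul (R := k) x))
      = Coalgebra.counit (R := k) x • (1 : H)

section Infra

open Coalgebra LinearMap

variable {k : Type*} [Field k] {H : Type*} [Ring H] [Bialgebra k H]

namespace Aux

open Coalgebra LinearMap

variable (G : BialgGrading k H)

/-- The decomposition equivalence. -/
def dec : (DirectSum ℕ fun n => ↥(G.grade n)) ≃ₗ[k] H :=
  LinearEquiv.ofBijective (DirectSum.coeLinearMap G.grade) G.internal

lemma dec_lof (n : ℕ) (a : G.grade n) :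
    dec G (DirectSum.lof k ℕ (fun i => ↥(G.grade i)) n a) = (a : H) := by
  simp [dec, DirectSum.lof_eq_of, DirectSum.coeLinearMap_of]
  exact DirectSum.coeLinearMap_of G.grade n a

/-- Projection onto the `n`-th graded piece. -/
def proj (n : ℕ) : H →ₗ[k] H :=
  (G.grade n).subtype ∘ₗ (DirectSum.component k ℕ (fun i => ↥(G.grade i)) n) ∘ₗ
    (dec G).symm.toLinearMap

lemma dec_symm_coe (n : ℕ) (a : G.grade n) :
    (dec G).symm (a : H) = DirectSum.lof k ℕ (fun i => ↥(G.grade i)) n a := by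
  rw [LinearEquiv.symm_apply_eq, dec_lof]

lemma proj_coe_same (n : ℕ) (a : G.grade n) : proj G n (a : H) = (a : H) := by
  simp [proj, dec_symm_coe, DirectSum.component.lof_self]

lemma proj_coe_ne {m n : ℕ} (h : m ≠ n) (a : G.grade n) : proj G m (a : H) = 0 := by
  simp only [proj, comp_apply, LinearEquiv.coe_coe, dec_symm_coe]
  rw [DirectSum.component.of]
  simp [dif_neg (Ne.symm h)]

lemma proj_comp_same (n : ℕ) : proj G n ∘ₗ (G.grade n).subtype = (G.grade n).subtype := by
  ext a; exact proj_coe_same G n a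

lemma proj_comp_ne {m n : ℕ} (h : m ≠ n) : proj G m ∘ₗ (G.grade n).subtype = 0 := by
  ext a; exact proj_coe_ne G h a

lemma proj_mem (n : ℕ) (x : H) : proj G n x ∈ G.grade n := by
  simp only [proj, comp_apply]
  exact Submodule.coe_mem _

/-- Extensionality along the grading. -/
lemma eq_of_grades {f g : H →ₗ[k] H}
    (h : ∀ n, f ∘ₗ (G.grade n).subtype = g ∘ₗ (G.grade n).subtype) : f = g := by
  have h2 : f ∘ₗ (dec G).toLinearMap = g ∘ₗ (dec G).toLinearMap := by
    apply DirectSum.linearMap_ext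
    intro n
    ext a
    have := congrFun (congrArg DFunLike.coe (h n)) a
    simpa [dec_lof] using this
  ext x
  have := congrFun (congrArg DFunLike.coe h2) ((dec G).symm x)
  simpa using this

end Aux

end Infra



section Graded

open Coalgebra LinearMap Aux

variable {k : Type*} [Field k] {H : Type*} [Ring H] [Bialgebra k H] (G : BialgGrading k H)

namespace Aux

lemma map_sub_zero_left {p q : ℕ} {f g : H →ₗ[k] H} (h : f ∘ₗ (G.grade p).subtype = 0) :
    TensorProduct.map f g ∘ₗ
      TensorProduct.map (G.grade p).subtype (G.grade q).subtype = 0 := by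
  rw [← TensorProduct.map_comp, h]
  ext a b
  simp

lemma map_sub_zero_right {p q : ℕ} {f g : H →ₗ[k] H} (h : g ∘ₗ (G.grade q).subtype = 0) :
    TensorProduct.map f g ∘ₗ
      TensorProduct.map (G.grade p).subtype (G.grade q).subtype = 0 := by
  rw [← TensorProduct.map_comp, h]
  ext a b
  simp

/-- If on each bidegree `(p, q)` with `p + q = n` the maps `f ⊗ g` and `f' ⊗ g'` agree,
then they agree on `comul x` for homogeneous `x` of degree `n`. -/
lemma comul_map_eq {n : ℕ} {f g f' g' : H →ₗ[k] H}
    (hc : ∀ p q, p + q = n →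
      TensorProduct.map f g ∘ₗ TensorProduct.map (G.grade p).subtype (G.grade q).subtype =
      TensorProduct.map f' g' ∘ₗ TensorProduct.map (G.grade p).subtype (G.grade q).subtype)
    {x : H} (hx : x ∈ G.grade n) :
    TensorProduct.map f g (Coalgebra.comul (R := k) x) =
      TensorProduct.map f' g' (Coalgebra.comul (R := k) x) := by
  have key : (⨆ p : {p : ℕ × ℕ // p.1 + p.2 = n}, tsub k (G.grade p.1.1) (G.grade p.1.2)) ≤
      LinearMap.ker (TensorProduct.map f g - TensorProduct.map f' g') := by
    apply iSup_le
    rintro ⟨⟨p, q⟩, hpq⟩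
    rintro _ ⟨w, rfl⟩
    rw [LinearMap.mem_ker, LinearMap.sub_apply, sub_eq_zero]
    have h1 := congrFun (congrArg DFunLike.coe (hc p q hpq)) w
    simpa using h1
  have := key (G.comul_mem n x hx)
  rw [LinearMap.mem_ker, LinearMap.sub_apply, sub_eq_zero] at this
  exact this

lemma comul_grade0 {x : H} (hx : x ∈ G.grade 0) :
    Coalgebra.comul (R := k) x ∈ tsub k (G.grade 0) (G.grade 0) := by
  have key : (⨆ p : {p : ℕ × ℕ // p.1 + p.2 = 0}, tsub k (G.grade p.1.1) (G.grade p.1.2)) ≤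
      tsub k (G.grade 0) (G.grade 0) := by
    apply iSup_le
    rintro ⟨⟨p, q⟩, hpq⟩
    obtain ⟨rfl, rfl⟩ : p = 0 ∧ q = 0 := by omega
    exact le_rfl
  exact key (G.comul_mem 0 x hx)

/-- A representation of `comul x` for `x` of degree zero, with both legs of degree zero. -/
def repr0 {x : H} (hx : x ∈ G.grade 0) : Coalgebra.Repr k x (↥(G.grade 0) × ↥(G.grade 0)) where
  index := (TensorProduct.exists_finset (R := k)
    ((LinearMap.mem_range.mp (comul_grade0 G hx)).choose)).choose
  left := fun z => (z.1 : H)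
  right := fun z => (z.2 : H)
  eq := by
    have hw := (LinearMap.mem_range.mp (comul_grade0 G hx)).choose_spec
    have hs := (TensorProduct.exists_finset (R := k)
      ((LinearMap.mem_range.mp (comul_grade0 G hx)).choose)).choose_spec
    conv_rhs => rw [← hw, hs]
    rw [map_sum]
    rfl

lemma repr0_left_mem {x : H} (hx : x ∈ G.grade 0) (i) : (repr0 G hx).left i ∈ G.grade 0 := by
  dsimp [repr0]
  exact Submodule.coe_mem _

lemma repr0_right_mem {x : H} (hx : x ∈ G.grade 0) (i) : (repr0 G hx).right i ∈ G.grade 0 := by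
  dsimp [repr0]
  exact Submodule.coe_mem _

end Aux

end Graded


section Conv

open Coalgebra LinearMap

variable {k : Type*} [Field k] {H : Type*} [Ring H] [Bialgebra k H]

namespace Aux

variable (μ : H →ₗ[k] H →ₗ[k] H)

/-- Convolution product on `End(H)` with respect to a chosen multiplication `μ`. -/
def conv (f g : H →ₗ[k] H) : H →ₗ[k] H :=
  TensorProduct.lift μ ∘ₗ TensorProduct.map f g ∘ₗ Coalgebra.comul

/-- Convolution unit. -/
def cunit : H →ₗ[k] H := LinearMap.toSpanSingleton k H 1 ∘ₗ Coalgebra.counit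

lemma cunit_apply (x : H) : cunit (k := k) (H := H) x = Coalgebra.counit (R := k) x • 1 := rfl

lemma conv_apply (f g : H →ₗ[k] H) (x : H) :
    conv μ f g x = TensorProduct.lift μ (TensorProduct.map f g (Coalgebra.comul x)) := rfl

lemma conv_repr (f g : H →ₗ[k] H) {x : H} {ι : Type*} (r : Coalgebra.Repr k x ι) :
    conv μ f g x = ∑ i ∈ r.index, μ (f (r.left i)) (g (r.right i)) := by
  rw [conv_apply, ← r.eq, map_sum, map_sum]
  simp

/-- `μ` is an associative unital multiplication. -/
structure IsConvMul (μ : H →ₗ[k] H →ₗ[k] H) : Prop where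
  assoc : ∀ a b c : H, μ (μ a b) c = μ a (μ b c)
  one_left : ∀ a : H, μ 1 a = a
  one_right : ∀ a : H, μ a 1 = a

lemma isConvMul_mul : IsConvMul (LinearMap.mul k H) := by
  refine ⟨fun a b c => ?_, fun a => ?_, fun a => ?_⟩ <;>
    simp [LinearMap.mul_apply', mul_assoc]

lemma isConvMul_flip : IsConvMul (LinearMap.mul k H).flip := by
  refine ⟨fun a b c => ?_, fun a => ?_, fun a => ?_⟩ <;>
    simp [LinearMap.mul_apply', mul_assoc]

variable {μ}

lemma conv_cunit_left (hμ : IsConvMul μ) (f : H →ₗ[k] H) : conv μ cunit f = f := by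
  ext x
  have key := Coalgebra.sum_counit_tmul_map_eq (R := k) f x
    (repr := Coalgebra.Repr.arbitrary k x)
  have key2 := congrArg (fun t => (TensorProduct.lid k H) t) key
  simp only [map_sum, TensorProduct.lid_tmul, one_smul] at key2
  rw [conv_repr μ _ _ (Coalgebra.Repr.arbitrary k x)]
  calc
    ∑ i ∈ (Coalgebra.Repr.arbitrary k x).index,
        μ (cunit ((Coalgebra.Repr.arbitrary k x).left i))
          (f ((Coalgebra.Repr.arbitrary k x).right i))
      = ∑ i ∈ (Coalgebra.Repr.arbitrary k x).index,
          Coalgebra.counit (R := k) ((Coalgebra.Repr.arbitrary k x).left i) •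
            f ((Coalgebra.Repr.arbitrary k x).right i) := by
        refine Finset.sum_congr rfl fun i _ => ?_
        rw [cunit_apply, map_smul, LinearMap.smul_apply, hμ.one_left]
    _ = f x := key2

lemma conv_cunit_right (hμ : IsConvMul μ) (f : H →ₗ[k] H) : conv μ f cunit = f := by
  ext x
  have key := Coalgebra.sum_map_tmul_counit_eq (R := k) f x
    (repr := Coalgebra.Repr.arbitrary k x)
  have key2 := congrArg (fun t => (TensorProduct.rid k H) t) key
  simp only [map_sum, TensorProduct.rid_tmul, one_smul] at key2
  rw [conv_repr μ _ _ (Coalgebra.Repr.arbitrary k x)]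
  calc
    ∑ i ∈ (Coalgebra.Repr.arbitrary k x).index,
        μ (f ((Coalgebra.Repr.arbitrary k x).left i))
          (cunit ((Coalgebra.Repr.arbitrary k x).right i))
      = ∑ i ∈ (Coalgebra.Repr.arbitrary k x).index,
          Coalgebra.counit (R := k) ((Coalgebra.Repr.arbitrary k x).right i) •
            f ((Coalgebra.Repr.arbitrary k x).left i) := by
        refine Finset.sum_congr rfl fun i _ => ?_
        rw [cunit_apply, map_smul, hμ.one_right]
    _ = f x := key2

lemma conv_assoc (hμ : IsConvMul μ) (f g h : H →ₗ[k] H) :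
    conv μ (conv μ f g) h = conv μ f (conv μ g h) := by
  ext x
  have key := Coalgebra.sum_map_tmul_tmul_eq (R := k) f g h x
    (repr := Coalgebra.Repr.arbitrary k x)
    (a₁ := fun i => Coalgebra.Repr.arbitrary k _)
    (a₂ := fun i => Coalgebra.Repr.arbitrary k _)
  have key2 := congrArg (fun t =>
    (TensorProduct.lift μ) (((TensorProduct.lift μ).lTensor H) t)) key
  simp only [map_sum, LinearMap.lTensor_tmul, TensorProduct.lift.tmul] at key2
  rw [conv_repr μ _ _ (Coalgebra.Repr.arbitrary k x),
    conv_repr μ _ _ (Coalgebra.Repr.arbitrary k x)]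
  calc
    ∑ i ∈ (Coalgebra.Repr.arbitrary k x).index,
        μ (conv μ f g ((Coalgebra.Repr.arbitrary k x).left i))
          (h ((Coalgebra.Repr.arbitrary k x).right i))
      = ∑ i ∈ (Coalgebra.Repr.arbitrary k x).index,
        ∑ j ∈ (Coalgebra.Repr.arbitrary k ((Coalgebra.Repr.arbitrary k x).left i)).index,
          μ (f ((Coalgebra.Repr.arbitrary k ((Coalgebra.Repr.arbitrary k x).left i)).left j))
            (μ (g ((Coalgebra.Repr.arbitrary k ((Coalgebra.Repr.arbitrary k x).left i)).right j))
              (h ((Coalgebra.Repr.arbitrary k x).right i))) := by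
        refine Finset.sum_congr rfl fun i _ => ?_
        rw [conv_repr μ f g (Coalgebra.Repr.arbitrary k _), map_sum, LinearMap.sum_apply]
        exact Finset.sum_congr rfl fun j _ => hμ.assoc _ _ _
    _ = ∑ i ∈ (Coalgebra.Repr.arbitrary k x).index,
          μ (f ((Coalgebra.Repr.arbitrary k x).left i))
            (conv μ g h ((Coalgebra.Repr.arbitrary k x).right i)) := by
        rw [← key2]
        refine Finset.sum_congr rfl fun i _ => ?_
        rw [conv_repr μ g h (Coalgebra.Repr.arbitrary k _), map_sum]

variable (μ)

lemma conv_add_left (f f' g : H →ₗ[k] H) :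
    conv μ (f + f') g = conv μ f g + conv μ f' g := by
  ext x
  simp [conv_apply, TensorProduct.map_add_left]

lemma conv_add_right (f g g' : H →ₗ[k] H) :
    conv μ f (g + g') = conv μ f g + conv μ f g' := by
  ext x
  simp [conv_apply, TensorProduct.map_add_right]

lemma conv_zero_left (g : H →ₗ[k] H) : conv μ 0 g = 0 := by
  ext x
  simp [conv_apply, show (TensorProduct.map (0 : H →ₗ[k] H) g) = 0 from by ext a b; simp]

lemma conv_zero_right (f : H →ₗ[k] H) : conv μ f 0 = 0 := by
  ext x
  simp [conv_apply, show (TensorProduct.map f (0 : H →ₗ[k] H)) = 0 from by ext a b; simp]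

lemma conv_smul_left (c : k) (f g : H →ₗ[k] H) :
    conv μ (c • f) g = c • conv μ f g := by
  ext x
  simp [conv_apply, TensorProduct.map_smul_left]

lemma conv_smul_right (c : k) (f g : H →ₗ[k] H) :
    conv μ f (c • g) = c • conv μ f g := by
  ext x
  simp [conv_apply, TensorProduct.map_smul_right]

lemma conv_sum_left {ι : Type*} (t : Finset ι) (f : ι → (H →ₗ[k] H)) (g : H →ₗ[k] H) :
    conv μ (∑ j ∈ t, f j) g = ∑ j ∈ t, conv μ (f j) g := by
  classical
  induction t using Finset.induction_on with
  | empty => simp [conv_zero_left]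
  | insert _ _ h ih => rw [Finset.sum_insert h, conv_add_left, ih, Finset.sum_insert h]

lemma conv_sum_right {ι : Type*} (t : Finset ι) (f : H →ₗ[k] H) (g : ι → (H →ₗ[k] H)) :
    conv μ f (∑ j ∈ t, g j) = ∑ j ∈ t, conv μ f (g j) := by
  classical
  induction t using Finset.induction_on with
  | empty => simp [conv_zero_right]
  | insert _ _ h ih => rw [Finset.sum_insert h, conv_add_right, ih, Finset.sum_insert h]

end Aux

end Conv


section Geom

open Coalgebra LinearMap

variable {k : Type*} [Field k] {H : Type*} [Ring H] [Bialgebra k H]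
variable (G : BialgGrading k H) (μ : H →ₗ[k] H →ₗ[k] H)

namespace Aux

lemma conv_vanish_on {f g : H →ₗ[k] H} {n : ℕ}
    (hc : ∀ p q, p + q = n →
      f ∘ₗ (G.grade p).subtype = 0 ∨ g ∘ₗ (G.grade q).subtype = 0)
    (a : G.grade n) : conv μ f g (a : H) = 0 := by
  have hz : TensorProduct.map (0 : H →ₗ[k] H) (0 : H →ₗ[k] H) = 0 := by
    ext a b; simp
  rw [conv_apply]
  have key : TensorProduct.map f g (Coalgebra.comul (R := k) (a : H)) =
      TensorProduct.map (0 : H →ₗ[k] H) (0 : H →ₗ[k] H) (Coalgebra.comul (R := k) (a : H)) := by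
    apply comul_map_eq G _ a.2
    intro p q hpq
    rw [hz, LinearMap.zero_comp]
    rcases hc p q hpq with h | h
    · exact map_sub_zero_left G h
    · exact map_sub_zero_right G h
  rw [key, hz, LinearMap.zero_apply, map_zero]

lemma conv_eq_on_right {f g g' : H →ₗ[k] H} {n : ℕ}
    (hgg' : ∀ q, q ≤ n → g ∘ₗ (G.grade q).subtype = g' ∘ₗ (G.grade q).subtype)
    (a : G.grade n) : conv μ f g (a : H) = conv μ f g' (a : H) := by
  rw [conv_apply, conv_apply]
  congr 1
  apply comul_map_eq G _ a.2
  intro p q hpq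
  rw [← TensorProduct.map_comp, ← TensorProduct.map_comp, hgg' q (by omega)]

lemma conv_eq_on_left {f f' g : H →ₗ[k] H} {n : ℕ}
    (hff' : ∀ p, p ≤ n → f ∘ₗ (G.grade p).subtype = f' ∘ₗ (G.grade p).subtype)
    (a : G.grade n) : conv μ f g (a : H) = conv μ f' g (a : H) := by
  rw [conv_apply, conv_apply]
  congr 1
  apply comul_map_eq G _ a.2
  intro p q hpq
  rw [← TensorProduct.map_comp, ← TensorProduct.map_comp, hff' p (by omega)]

/-- Convolution powers. -/
def cpow (ν : H →ₗ[k] H) : ℕ → (H →ₗ[k] H)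
  | 0 => cunit
  | m + 1 => conv μ ν (cpow ν m)

lemma cpow_succ_right {μ : H →ₗ[k] H →ₗ[k] H} (hμ : IsConvMul μ) (ν : H →ₗ[k] H) (m : ℕ) :
    conv μ (cpow μ ν m) ν = cpow μ ν (m + 1) := by
  induction m with
  | zero =>
      show conv μ cunit ν = conv μ ν (cpow μ ν 0)
      rw [conv_cunit_left hμ]
      show ν = conv μ ν cunit
      rw [conv_cunit_right hμ]
  | succ m ih =>
      show conv μ (conv μ ν (cpow μ ν m)) ν = conv μ ν (cpow μ ν (m + 1))
      rw [conv_assoc hμ, ih]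

lemma cpow_vanish (ν : H →ₗ[k] H) (hν0 : ν ∘ₗ (G.grade 0).subtype = 0) :
    ∀ n, ∀ j, n < j → cpow μ ν j ∘ₗ (G.grade n).subtype = 0 := by
  intro n
  induction n using Nat.strong_induction_on with
  | _ n IH =>
    intro j hj
    obtain ⟨m, rfl⟩ : ∃ m, j = m + 1 := ⟨j - 1, by omega⟩
    ext a
    show conv μ ν (cpow μ ν m) (a : H) = 0
    apply conv_vanish_on G μ (n := n) _ a
    intro p q hpq
    rcases Nat.eq_zero_or_pos p with hp | hp
    · left; subst hp; exact hν0
    · right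
      exact IH q (by omega) m (by omega)

/-- Partial alternating geometric series. -/
def Asum (ν : H →ₗ[k] H) (m : ℕ) : H →ₗ[k] H :=
  ∑ j ∈ Finset.range (m + 1), ((-1 : k) ^ j) • cpow μ ν j

lemma Asum_stable (ν : H →ₗ[k] H) (hν0 : ν ∘ₗ (G.grade 0).subtype = 0)
    {q m : ℕ} (hqm : q ≤ m) :
    Asum μ ν m ∘ₗ (G.grade q).subtype = Asum μ ν q ∘ₗ (G.grade q).subtype := by
  induction m, hqm using Nat.le_induction with
  | base => rfl
  | succ m hm ih =>
      rw [show Asum μ ν (m + 1) =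
          Asum μ ν m + ((-1 : k) ^ (m + 1)) • cpow μ ν (m + 1) from
        Finset.sum_range_succ _ (m + 1), LinearMap.add_comp, ih, LinearMap.smul_comp,
        cpow_vanish G μ ν hν0 q (m + 1) (by omega), smul_zero, add_zero]

lemma Asum_add_shift (ν : H →ₗ[k] H) (n : ℕ) :
    Asum μ ν n + (∑ j ∈ Finset.range (n + 1), ((-1 : k) ^ j) • cpow μ ν (j + 1)) =
      cunit - ((-1 : k) ^ (n + 1)) • cpow μ ν (n + 1) := by
  have h1 : ∀ j : ℕ, ((-1 : k) ^ j) • cpow μ ν (j + 1) =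
      -(((-1 : k) ^ (j + 1)) • cpow μ ν (j + 1)) := by
    intro j
    rw [pow_succ, mul_neg_one]
    exact (neg_neg _).symm.trans (congrArg Neg.neg (neg_smul _ _).symm)
  rw [Finset.sum_congr rfl fun j _ => h1 j, Finset.sum_neg_distrib]
  have h2 := Finset.sum_range_succ' (fun j => ((-1 : k) ^ j) • cpow μ ν j) (n + 1)
  have h3 := Finset.sum_range_succ (fun j => ((-1 : k) ^ j) • cpow μ ν j) (n + 1)
  have hf0 : ((-1 : k) ^ 0) • cpow μ ν 0 = cunit := by
    rw [pow_zero, one_smul]; rfl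
  have key : (∑ j ∈ Finset.range (n + 1), ((-1 : k) ^ (j + 1)) • cpow μ ν (j + 1)) =
      Asum μ ν n + ((-1 : k) ^ (n + 1)) • cpow μ ν (n + 1) - cunit := by
    have := h2.symm.trans h3
    rw [hf0] at this
    have hA : Asum μ ν n = ∑ j ∈ Finset.range (n + 1), ((-1 : k) ^ j) • cpow μ ν j := rfl
    rw [← hA] at this
    linear_combination (norm := abel) this
  rw [key]
  abel

/-- The global geometric series `∑ (-1)^j ν^{*j}`, assembled along the grading. -/
def gsum (ν : H →ₗ[k] H) : H →ₗ[k] H :=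
  (DirectSum.toModule k ℕ H fun n => Asum μ ν n ∘ₗ (G.grade n).subtype) ∘ₗ
    (dec G).symm.toLinearMap

lemma gsum_comp (ν : H →ₗ[k] H) (n : ℕ) :
    gsum G μ ν ∘ₗ (G.grade n).subtype = Asum μ ν n ∘ₗ (G.grade n).subtype := by
  ext a
  show (DirectSum.toModule k ℕ H fun n => Asum μ ν n ∘ₗ (G.grade n).subtype)
    ((dec G).symm (a : H)) = _
  rw [dec_symm_coe, DirectSum.toModule_lof]

lemma geom_left {μ : H →ₗ[k] H →ₗ[k] H} (hμ : IsConvMul μ) (ν : H →ₗ[k] H)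
    (hν0 : ν ∘ₗ (G.grade 0).subtype = 0) :
    conv μ (gsum G μ ν) (cunit + ν) = cunit := by
  apply eq_of_grades G
  intro n
  ext a
  show conv μ (gsum G μ ν) (cunit + ν) (a : H) = cunit (a : H)
  rw [conv_add_right, LinearMap.add_apply, conv_cunit_right hμ]
  have h1 : gsum G μ ν (a : H) = Asum μ ν n (a : H) := by
    have := congrArg (fun φ => φ a) (gsum_comp G μ ν n)
    simpa using this
  have h2 : conv μ (gsum G μ ν) ν (a : H) = conv μ (Asum μ ν n) ν (a : H) := by
    apply conv_eq_on_left G μ (n := n) _ a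
    intro p hp
    rw [gsum_comp, Asum_stable G μ ν hν0 hp]
  rw [h1, h2]
  have h3 : conv μ (Asum μ ν n) ν =
      ∑ j ∈ Finset.range (n + 1), ((-1 : k) ^ j) • cpow μ ν (j + 1) := by
    rw [Asum, conv_sum_left]
    exact Finset.sum_congr rfl fun j _ => by
      rw [conv_smul_left, cpow_succ_right hμ]
  have h4 := congrArg (fun φ => φ (a : H)) (Asum_add_shift μ ν n)
  simp only [LinearMap.add_apply, LinearMap.sub_apply, LinearMap.smul_apply] at h4
  rw [← h3] at h4
  rw [h4]
  have h5 : cpow μ ν (n + 1) (a : H) = 0 := by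
    have := congrArg (fun φ => φ a) (cpow_vanish G μ ν hν0 n (n + 1) (by omega))
    simpa using this
  rw [h5, smul_zero, sub_zero]

lemma geom_right {μ : H →ₗ[k] H →ₗ[k] H} (hμ : IsConvMul μ) (ν : H →ₗ[k] H)
    (hν0 : ν ∘ₗ (G.grade 0).subtype = 0) :
    conv μ (cunit + ν) (gsum G μ ν) = cunit := by
  apply eq_of_grades G
  intro n
  ext a
  show conv μ (cunit + ν) (gsum G μ ν) (a : H) = cunit (a : H)
  rw [conv_add_left, LinearMap.add_apply, conv_cunit_left hμ]
  have h1 : gsum G μ ν (a : H) = Asum μ ν n (a : H) := by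
    have := congrArg (fun φ => φ a) (gsum_comp G μ ν n)
    simpa using this
  have h2 : conv μ ν (gsum G μ ν) (a : H) = conv μ ν (Asum μ ν n) (a : H) := by
    apply conv_eq_on_right G μ (n := n) _ a
    intro q hq
    rw [gsum_comp, Asum_stable G μ ν hν0 hq]
  rw [h1, h2]
  have h3 : conv μ ν (Asum μ ν n) =
      ∑ j ∈ Finset.range (n + 1), ((-1 : k) ^ j) • cpow μ ν (j + 1) := by
    rw [Asum, conv_sum_right]
    exact Finset.sum_congr rfl fun j _ => by rw [conv_smul_right]; rfl
  have h4 := congrArg (fun φ => φ (a : H)) (Asum_add_shift μ ν n)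
  simp only [LinearMap.add_apply, LinearMap.sub_apply, LinearMap.smul_apply] at h4
  rw [← h3] at h4
  rw [h4]
  have h5 : cpow μ ν (n + 1) (a : H) = 0 := by
    have := congrArg (fun φ => φ a) (cpow_vanish G μ ν hν0 n (n + 1) (by omega))
    simpa using this
  rw [h5, smul_zero, sub_zero]

/-- Existence of a two-sided convolution inverse of the identity, given a degree-zero seed. -/
lemma exists_conv_inverse {μ : H →ₗ[k] H →ₗ[k] H} (hμ : IsConvMul μ) (g₀ : H →ₗ[k] H)
    (h1 : conv μ g₀ (proj G 0) = cunit) (h2 : conv μ (proj G 0) g₀ = cunit) :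
    ∃ S : H →ₗ[k] H, conv μ S LinearMap.id = cunit ∧ conv μ LinearMap.id S = cunit := by
  set P0 : H →ₗ[k] H := proj G 0 with hP0
  set Pp : H →ₗ[k] H := LinearMap.id - P0 with hPpdef
  have hid : (LinearMap.id : H →ₗ[k] H) = P0 + Pp := by rw [hPpdef]; abel
  have hPp0 : Pp ∘ₗ (G.grade 0).subtype = 0 := by
    rw [hPpdef, LinearMap.sub_comp, hP0, proj_comp_same, LinearMap.id_comp, sub_self]
  set N : H →ₗ[k] H := conv μ g₀ Pp with hN
  have hN0 : N ∘ₗ (G.grade 0).subtype = 0 := by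
    ext a
    show conv μ g₀ Pp (a : H) = 0
    exact conv_vanish_on G μ (n := 0) (fun p q hpq => by
      obtain ⟨rfl, rfl⟩ : p = 0 ∧ q = 0 := by omega
      exact Or.inr hPp0) a
  set M : H →ₗ[k] H := conv μ Pp g₀ with hM
  have hM0 : M ∘ₗ (G.grade 0).subtype = 0 := by
    ext a
    show conv μ Pp g₀ (a : H) = 0
    exact conv_vanish_on G μ (n := 0) (fun p q hpq => by
      obtain ⟨rfl, rfl⟩ : p = 0 ∧ q = 0 := by omega
      exact Or.inl hPp0) a
  have hg0id : conv μ g₀ LinearMap.id = cunit + N := by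
    conv_lhs => rw [hid]
    rw [conv_add_right, h1]
  have hidg0 : conv μ LinearMap.id g₀ = cunit + M := by
    conv_lhs => rw [hid]
    rw [conv_add_left, h2]
  set ℓ : H →ₗ[k] H := conv μ (gsum G μ N) g₀ with hℓ
  set r : H →ₗ[k] H := conv μ g₀ (gsum G μ M) with hr
  have hℓ_left : conv μ ℓ LinearMap.id = cunit := by
    rw [hℓ, conv_assoc hμ, hg0id, geom_left G hμ N hN0]
  have hr_right : conv μ LinearMap.id r = cunit := by
    rw [hr, ← conv_assoc hμ, hidg0, geom_right G hμ M hM0]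
  have hℓr : ℓ = r := by
    calc ℓ = conv μ ℓ cunit := (conv_cunit_right hμ ℓ).symm
    _ = conv μ ℓ (conv μ LinearMap.id r) := by rw [hr_right]
    _ = conv μ (conv μ ℓ LinearMap.id) r := (conv_assoc hμ _ _ _).symm
    _ = conv μ cunit r := by rw [hℓ_left]
    _ = r := conv_cunit_left hμ r
  exact ⟨ℓ, hℓ_left, by rw [hℓr]; exact hr_right⟩

end Aux

end Geom


section Seeds

open Coalgebra LinearMap

variable {k : Type*} [Field k] {H : Type*} [Ring H] [Bialgebra k H] (G : BialgGrading k H)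

namespace Aux

lemma lift_mul_eq : TensorProduct.lift (LinearMap.mul k H) = LinearMap.mul' k H := rfl

lemma sum_counit_smul {x : H} {ι : Type*} (r : Coalgebra.Repr k x ι) :
    ∑ i ∈ r.index, Coalgebra.counit (R := k) (r.left i) • r.right i = x := by
  calc ∑ i ∈ r.index, Coalgebra.counit (R := k) (r.left i) • r.right i
      = TensorProduct.lid k H (∑ i ∈ r.index,
          Coalgebra.counit (R := k) (r.left i) ⊗ₜ[k] r.right i) := by
        rw [map_sum]; simp
    _ = TensorProduct.lid k H ((1 : k) ⊗ₜ[k] x) := by rw [Coalgebra.sum_counit_tmul_eq r]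
    _ = x := by simp

lemma sum_smul_counit {x : H} {ι : Type*} (r : Coalgebra.Repr k x ι) :
    ∑ i ∈ r.index, Coalgebra.counit (R := k) (r.right i) • r.left i = x := by
  calc ∑ i ∈ r.index, Coalgebra.counit (R := k) (r.right i) • r.left i
      = TensorProduct.rid k H (∑ i ∈ r.index,
          r.left i ⊗ₜ[k] Coalgebra.counit (R := k) (r.right i)) := by
        rw [map_sum]; simp
    _ = TensorProduct.rid k H (x ⊗ₜ[k] (1 : k)) := by rw [Coalgebra.sum_tmul_counit_eq r]
    _ = x := by simp

lemma conv_seed_left (μ : H →ₗ[k] H →ₗ[k] H) (t : H →ₗ[k] H)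
    (hpt : ∀ a : G.grade 0, conv μ (t ∘ₗ proj G 0) (proj G 0) (a : H)
      = Coalgebra.counit (R := k) (a : H) • 1) :
    conv μ (t ∘ₗ proj G 0) (proj G 0) = cunit := by
  apply eq_of_grades G
  intro n
  match n with
  | 0 => ext a; exact hpt a
  | (n + 1) =>
    ext a
    show conv μ (t ∘ₗ proj G 0) (proj G 0) (a : H) = cunit (a : H)
    rw [conv_vanish_on G μ (n := n + 1) ?_ a, cunit_apply,
      G.counit_zero (n + 1) (by omega) _ a.2, zero_smul]
    intro p q hpq
    rcases Nat.eq_zero_or_pos p with hp | hp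
    · right
      subst hp
      exact proj_comp_ne G (by omega)
    · left
      rw [LinearMap.comp_assoc, proj_comp_ne G (by omega), LinearMap.comp_zero]

lemma conv_seed_right (μ : H →ₗ[k] H →ₗ[k] H) (t : H →ₗ[k] H)
    (hpt : ∀ a : G.grade 0, conv μ (proj G 0) (t ∘ₗ proj G 0) (a : H)
      = Coalgebra.counit (R := k) (a : H) • 1) :
    conv μ (proj G 0) (t ∘ₗ proj G 0) = cunit := by
  apply eq_of_grades G
  intro n
  match n with
  | 0 => ext a; exact hpt a
  | (n + 1) =>
    ext a
    show conv μ (proj G 0) (t ∘ₗ proj G 0) (a : H) = cunit (a : H)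
    rw [conv_vanish_on G μ (n := n + 1) ?_ a, cunit_apply,
      G.counit_zero (n + 1) (by omega) _ a.2, zero_smul]
    intro p q hpq
    rcases Nat.eq_zero_or_pos q with hq | hq
    · left
      subst hq
      exact proj_comp_ne G (by omega)
    · right
      rw [LinearMap.comp_assoc, proj_comp_ne G (by omega), LinearMap.comp_zero]

lemma map_proj0_eq {t t' : H →ₗ[k] H} {x : H} (hx : x ∈ G.grade 0)
    (f g : H →ₗ[k] H) :
    TensorProduct.map (t ∘ₗ proj G 0) (t' ∘ₗ proj G 0) (Coalgebra.comul (R := k) x) =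
      TensorProduct.map t t' (Coalgebra.comul (R := k) x) := by
  apply comul_map_eq G _ hx
  intro p q hpq
  obtain ⟨rfl, rfl⟩ : p = 0 ∧ q = 0 := by omega
  rw [← TensorProduct.map_comp, ← TensorProduct.map_comp, LinearMap.comp_assoc,
    LinearMap.comp_assoc, proj_comp_same]

lemma seed_left_of_anti (s : H →ₗ[k] H) (hanti : IsAntipodeOn k s (G.grade 0)) :
    conv (LinearMap.mul k H) (s ∘ₗ proj G 0) (proj G 0) = cunit := by
  apply conv_seed_left G _ s
  intro a
  rw [conv_apply]
  have key : TensorProduct.map (s ∘ₗ proj G 0) (proj G 0) (Coalgebra.comul (R := k) (a : H)) =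
      TensorProduct.map s LinearMap.id (Coalgebra.comul (R := k) (a : H)) := by
    have := map_proj0_eq G (t := s) (t' := LinearMap.id) a.2 s LinearMap.id
    rw [show LinearMap.id ∘ₗ proj G 0 = proj G 0 from LinearMap.id_comp _] at this
    exact this
  rw [key, lift_mul_eq]
  exact (hanti (a : H) a.2).1

lemma seed_right_of_anti (s : H →ₗ[k] H) (hanti : IsAntipodeOn k s (G.grade 0)) :
    conv (LinearMap.mul k H) (proj G 0) (s ∘ₗ proj G 0) = cunit := by
  apply conv_seed_right G _ s
  intro a
  rw [conv_apply]
  have key : TensorProduct.map (proj G 0) (s ∘ₗ proj G 0) (Coalgebra.comul (R := k) (a : H)) =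
      TensorProduct.map LinearMap.id s (Coalgebra.comul (R := k) (a : H)) := by
    have := map_proj0_eq G (t := LinearMap.id) (t' := s) a.2 LinearMap.id s
    rw [show LinearMap.id ∘ₗ proj G 0 = proj G 0 from LinearMap.id_comp _] at this
    exact this
  rw [key, lift_mul_eq]
  exact (hanti (a : H) a.2).2

lemma exists_S (s : H →ₗ[k] H) (hanti : IsAntipodeOn k s (G.grade 0)) :
    ∃ S : H →ₗ[k] H, conv (LinearMap.mul k H) S LinearMap.id = cunit ∧
      conv (LinearMap.mul k H) LinearMap.id S = cunit :=
  exists_conv_inverse G isConvMul_mul (s ∘ₗ proj G 0)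
    (seed_left_of_anti G s hanti) (seed_right_of_anti G s hanti)

end Aux

end Seeds


section Antimult

open Coalgebra LinearMap

variable {k : Type*} [Field k] {H : Type*} [Ring H] [Bialgebra k H]

namespace Aux

lemma hcm_mul {a b : H} {ι κ : Type*} (ra : Coalgebra.Repr k a ι) (rb : Coalgebra.Repr k b κ) :
    Coalgebra.comul (R := k) ((LinearMap.mul k H) a b) =
      ∑ i ∈ ra.index, ∑ j ∈ rb.index,
        ((LinearMap.mul k H) (ra.left i) (rb.left j)) ⊗ₜ[k]
          ((LinearMap.mul k H) (ra.right i) (rb.right j)) := by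
  simp only [LinearMap.mul_apply']
  rw [Bialgebra.comul_mul, ← ra.eq, ← rb.eq, Finset.sum_mul_sum]
  simp [Algebra.TensorProduct.tmul_mul_tmul]

lemma hcm_flip {a b : H} {ι κ : Type*} (ra : Coalgebra.Repr k a ι) (rb : Coalgebra.Repr k b κ) :
    Coalgebra.comul (R := k) ((LinearMap.mul k H).flip a b) =
      ∑ i ∈ ra.index, ∑ j ∈ rb.index,
        ((LinearMap.mul k H).flip (ra.left i) (rb.left j)) ⊗ₜ[k]
          ((LinearMap.mul k H).flip (ra.right i) (rb.right j)) := by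
  simp only [LinearMap.flip_apply, LinearMap.mul_apply']
  rw [Bialgebra.comul_mul, ← ra.eq, ← rb.eq, Finset.sum_mul_sum]
  rw [Finset.sum_comm]
  simp [Algebra.TensorProduct.tmul_mul_tmul]

lemma hce_mul (a b : H) : Coalgebra.counit (R := k) ((LinearMap.mul k H) a b) =
    Coalgebra.counit (R := k) a * Coalgebra.counit (R := k) b := by
  simp [LinearMap.mul_apply', Bialgebra.counit_mul]

lemma hce_flip (a b : H) : Coalgebra.counit (R := k) ((LinearMap.mul k H).flip a b) =
    Coalgebra.counit (R := k) a * Coalgebra.counit (R := k) b := by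
  simp [LinearMap.flip_apply, LinearMap.mul_apply', Bialgebra.counit_mul, mul_comm]

universe uk uH

/-- The antipode is anti-multiplicative (generic in the multiplication `μ`). -/
lemma conv_antimult {k : Type uk} [Field k] {H' : Type uH} [Ring H'] [Bialgebra k H']
    {μ : H' →ₗ[k] H' →ₗ[k] H'} (hμ : IsConvMul μ)
    (hcm : ∀ {x y : H'} (rx : Coalgebra.Repr.{uk, uH, uH} k x (H' × H'))
      (ry : Coalgebra.Repr.{uk, uH, uH} k y (H' × H')),
      Coalgebra.comul (R := k) (μ x y) =
        ∑ i ∈ rx.index, ∑ j ∈ ry.index,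
          (μ (rx.left i) (ry.left j)) ⊗ₜ[k] (μ (rx.right i) (ry.right j)))
    (hce : ∀ x y : H', Coalgebra.counit (R := k) (μ x y) =
      Coalgebra.counit (R := k) x * Coalgebra.counit (R := k) y)
    (S : H' →ₗ[k] H')
    (hSl : conv μ S LinearMap.id = cunit) (hSr : conv μ LinearMap.id S = cunit)
    (a b : H') : S (μ a b) = μ (S b) (S a) := by
  classical
  let ra : Coalgebra.Repr k a (H' × H') := Coalgebra.Repr.arbitrary k a
  let rb : Coalgebra.Repr k b (H' × H') := Coalgebra.Repr.arbitrary k b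
  let A1 : (i : H' × H') → Coalgebra.Repr k (ra.left i) (H' × H') :=
    fun i => Coalgebra.Repr.arbitrary k (ra.left i)
  let A2 : (i : H' × H') → Coalgebra.Repr k (ra.right i) (H' × H') :=
    fun i => Coalgebra.Repr.arbitrary k (ra.right i)
  let B1 : (p : H' × H') → Coalgebra.Repr k (rb.left p) (H' × H') :=
    fun p => Coalgebra.Repr.arbitrary k (rb.left p)
  let B2 : (p : H' × H') → Coalgebra.Repr k (rb.right p) (H' × H') :=
    fun p => Coalgebra.Repr.arbitrary k (rb.right p)
  have hcolA : ∀ i : H' × H',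
      ∑ j ∈ (A1 i).index, μ (S ((A1 i).left j)) ((A1 i).right j) =
        Coalgebra.counit (R := k) (ra.left i) • 1 := by
    intro i
    have h : conv μ S LinearMap.id (ra.left i) = cunit (k := k) (ra.left i) := by rw [hSl]
    rw [conv_repr μ _ _ (A1 i), cunit_apply] at h
    simpa using h
  have hcolB : ∀ p : H' × H',
      ∑ q ∈ (B1 p).index, μ (S ((B1 p).left q)) ((B1 p).right q) =
        Coalgebra.counit (R := k) (rb.left p) • 1 := by
    intro p
    have h : conv μ S LinearMap.id (rb.left p) = cunit (k := k) (rb.left p) := by rw [hSl]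
    rw [conv_repr μ _ _ (B1 p), cunit_apply] at h
    simpa using h
  have hin : ∀ (i : H' × H') (p : H' × H'),
      (∑ j ∈ (A2 i).index, ∑ q ∈ (B2 p).index,
        μ (μ ((A2 i).left j) ((B2 p).left q))
          (S (μ ((A2 i).right j) ((B2 p).right q))))
      = Coalgebra.counit (R := k) (μ (ra.right i) (rb.right p)) • 1 := by
    intro i p
    let mrep : Coalgebra.Repr k (μ (ra.right i) (rb.right p)) ((H' × H') × (H' × H')) :=
      { index := (A2 i).index ×ˢ (B2 p).index
        left := fun z => μ ((A2 i).left z.1) ((B2 p).left z.2)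
        right := fun z => μ ((A2 i).right z.1) ((B2 p).right z.2)
        eq := by
          rw [Finset.sum_product]
          exact (hcm (A2 i) (B2 p)).symm }
    have h : conv μ LinearMap.id S (μ (ra.right i) (rb.right p))
        = cunit (k := k) (μ (ra.right i) (rb.right p)) := by rw [hSr]
    rw [conv_repr μ _ _ mrep, cunit_apply] at h
    simp only [LinearMap.id_coe, id_eq] at h
    rw [← h, Finset.sum_product]
  -- Claim A : the quadruple sum equals `μ (S b) (S a)`
  have hEA : (∑ i ∈ ra.index, ∑ p ∈ rb.index, ∑ j ∈ (A2 i).index, ∑ q ∈ (B2 p).index,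
      μ (S (rb.left p)) (μ (S (ra.left i))
        (μ (μ ((A2 i).left j) ((B2 p).left q))
          (S (μ ((A2 i).right j) ((B2 p).right q))))))
      = μ (S b) (S a) := by
    have step1 : ∀ (i : H' × H') (p : H' × H'),
        (∑ j ∈ (A2 i).index, ∑ q ∈ (B2 p).index,
          μ (S (rb.left p)) (μ (S (ra.left i))
            (μ (μ ((A2 i).left j) ((B2 p).left q))
              (S (μ ((A2 i).right j) ((B2 p).right q))))))
        = (Coalgebra.counit (R := k) (ra.right i) * Coalgebra.counit (R := k) (rb.right p)) •
            μ (S (rb.left p)) (S (ra.left i)) := by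
      intro i p
      rw [show (∑ j ∈ (A2 i).index, ∑ q ∈ (B2 p).index,
          μ (S (rb.left p)) (μ (S (ra.left i))
            (μ (μ ((A2 i).left j) ((B2 p).left q))
              (S (μ ((A2 i).right j) ((B2 p).right q))))))
          = μ (S (rb.left p)) (μ (S (ra.left i))
              (∑ j ∈ (A2 i).index, ∑ q ∈ (B2 p).index,
                μ (μ ((A2 i).left j) ((B2 p).left q))
                  (S (μ ((A2 i).right j) ((B2 p).right q))))) from by
        rw [map_sum, map_sum]
        exact Finset.sum_congr rfl fun j _ => by rw [map_sum, map_sum]]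
      rw [hin i p, hce, map_smul, map_smul, hμ.one_right]
    rw [Finset.sum_congr rfl fun i _ => Finset.sum_congr rfl fun p _ => step1 i p]
    have hSb : S b = ∑ p ∈ rb.index,
        Coalgebra.counit (R := k) (rb.right p) • S (rb.left p) := by
      conv_lhs => rw [← sum_smul_counit rb]
      rw [map_sum]
      exact Finset.sum_congr rfl fun p _ => (map_smul S _ _)
    have hSa : S a = ∑ i ∈ ra.index,
        Coalgebra.counit (R := k) (ra.right i) • S (ra.left i) := by
      conv_lhs => rw [← sum_smul_counit ra]
      rw [map_sum]
      exact Finset.sum_congr rfl fun i _ => (map_smul S _ _)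
    have expand : μ (S b) (S a)
        = ∑ p ∈ rb.index, ∑ i ∈ ra.index,
            (Coalgebra.counit (R := k) (ra.right i) * Coalgebra.counit (R := k) (rb.right p)) •
              μ (S (rb.left p)) (S (ra.left i)) := by
      rw [hSb, hSa, LinearMap.map_sum₂]
      refine Finset.sum_congr rfl fun p _ => ?_
      rw [map_sum]
      refine Finset.sum_congr rfl fun i _ => ?_
      rw [LinearMap.map_smul₂, map_smul, smul_smul, mul_comm]
    exact Finset.sum_comm.trans expand.symm
  -- Claim B : the quadruple sum equals `S (μ a b)`
  have hEB : (∑ i ∈ ra.index, ∑ p ∈ rb.index, ∑ j ∈ (A2 i).index, ∑ q ∈ (B2 p).index,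
      μ (S (rb.left p)) (μ (S (ra.left i))
        (μ (μ ((A2 i).left j) ((B2 p).left q))
          (S (μ ((A2 i).right j) ((B2 p).right q))))))
      = S (μ a b) := by
    have reorder : (∑ i ∈ ra.index, ∑ p ∈ rb.index, ∑ j ∈ (A2 i).index, ∑ q ∈ (B2 p).index,
        μ (S (rb.left p)) (μ (S (ra.left i))
          (μ (μ ((A2 i).left j) ((B2 p).left q))
            (S (μ ((A2 i).right j) ((B2 p).right q))))))
        = ∑ p ∈ rb.index, ∑ q ∈ (B2 p).index, ∑ i ∈ ra.index, ∑ j ∈ (A2 i).index,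
          μ (S (rb.left p)) (μ (S (ra.left i))
            (μ (μ ((A2 i).left j) ((B2 p).left q))
              (S (μ ((A2 i).right j) ((B2 p).right q))))) := by
      calc (∑ i ∈ ra.index, ∑ p ∈ rb.index, ∑ j ∈ (A2 i).index, ∑ q ∈ (B2 p).index,
          μ (S (rb.left p)) (μ (S (ra.left i))
            (μ (μ ((A2 i).left j) ((B2 p).left q))
              (S (μ ((A2 i).right j) ((B2 p).right q))))))
          = ∑ p ∈ rb.index, ∑ i ∈ ra.index, ∑ j ∈ (A2 i).index, ∑ q ∈ (B2 p).index,
            μ (S (rb.left p)) (μ (S (ra.left i))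
              (μ (μ ((A2 i).left j) ((B2 p).left q))
                (S (μ ((A2 i).right j) ((B2 p).right q))))) := Finset.sum_comm
        _ = ∑ p ∈ rb.index, ∑ i ∈ ra.index, ∑ q ∈ (B2 p).index, ∑ j ∈ (A2 i).index,
            μ (S (rb.left p)) (μ (S (ra.left i))
              (μ (μ ((A2 i).left j) ((B2 p).left q))
                (S (μ ((A2 i).right j) ((B2 p).right q))))) :=
            Finset.sum_congr rfl fun p _ => Finset.sum_congr rfl fun i _ => Finset.sum_comm
        _ = ∑ p ∈ rb.index, ∑ q ∈ (B2 p).index, ∑ i ∈ ra.index, ∑ j ∈ (A2 i).index,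
            μ (S (rb.left p)) (μ (S (ra.left i))
              (μ (μ ((A2 i).left j) ((B2 p).left q))
                (S (μ ((A2 i).right j) ((B2 p).right q))))) :=
            Finset.sum_congr rfl fun p _ => Finset.sum_comm
    rw [reorder]
    have hfix : ∀ (p : H' × H') (q : H' × H'),
        (∑ i ∈ ra.index, ∑ j ∈ (A2 i).index,
          μ (S (rb.left p)) (μ (S (ra.left i))
            (μ (μ ((A2 i).left j) ((B2 p).left q))
              (S (μ ((A2 i).right j) ((B2 p).right q))))))
        = μ (S (rb.left p)) (μ ((B2 p).left q) (S (μ a ((B2 p).right q)))) := by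
      intro p q
      have key := Coalgebra.sum_map_tmul_tmul_eq (R := k)
        (S) (μ.flip ((B2 p).left q)) (S ∘ₗ μ.flip ((B2 p).right q)) a
        (repr := ra) (a₁ := A1) (a₂ := A2)
      have key2 := congrArg
        (fun t => (TensorProduct.lift μ) (((TensorProduct.lift μ).lTensor H') t)) key
      simp only [map_sum, LinearMap.lTensor_tmul, TensorProduct.lift.tmul,
        LinearMap.flip_apply, LinearMap.coe_comp, Function.comp_apply] at key2
      calc
        (∑ i ∈ ra.index, ∑ j ∈ (A2 i).index,
          μ (S (rb.left p)) (μ (S (ra.left i))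
            (μ (μ ((A2 i).left j) ((B2 p).left q))
              (S (μ ((A2 i).right j) ((B2 p).right q))))))
          = μ (S (rb.left p)) (∑ i ∈ ra.index, ∑ j ∈ (A2 i).index,
              μ (S (ra.left i))
                (μ (μ ((A2 i).left j) ((B2 p).left q))
                  (S (μ ((A2 i).right j) ((B2 p).right q))))) := by
            rw [map_sum]
            exact Finset.sum_congr rfl fun i _ => by rw [map_sum]
        _ = μ (S (rb.left p)) (∑ i ∈ ra.index, ∑ j ∈ (A1 i).index,
              μ (S ((A1 i).left j))
                (μ (μ ((A1 i).right j) ((B2 p).left q))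
                  (S (μ (ra.right i) ((B2 p).right q))))) := by rw [key2]
        _ = μ (S (rb.left p)) (∑ i ∈ ra.index,
              Coalgebra.counit (R := k) (ra.left i) •
                μ ((B2 p).left q) (S (μ (ra.right i) ((B2 p).right q)))) := by
            congr 1
            refine Finset.sum_congr rfl fun i _ => ?_
            rw [show (∑ j ∈ (A1 i).index,
                μ (S ((A1 i).left j))
                  (μ (μ ((A1 i).right j) ((B2 p).left q))
                    (S (μ (ra.right i) ((B2 p).right q)))))
                = μ (∑ j ∈ (A1 i).index, μ (S ((A1 i).left j)) ((A1 i).right j))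
                    (μ ((B2 p).left q) (S (μ (ra.right i) ((B2 p).right q)))) from by
              rw [map_sum, LinearMap.sum_apply]
              refine Finset.sum_congr rfl fun j _ => ?_
              simp only [hμ.assoc]]
            rw [hcolA i, map_smul, LinearMap.smul_apply, hμ.one_left]
        _ = μ (S (rb.left p)) (μ ((B2 p).left q) (S (μ a ((B2 p).right q)))) := by
            congr 1
            have hlin : ((μ ((B2 p).left q)) ∘ₗ S ∘ₗ μ.flip ((B2 p).right q))
                  (∑ i ∈ ra.index, Coalgebra.counit (R := k) (ra.left i) • ra.right i)
                = ((μ ((B2 p).left q)) ∘ₗ S ∘ₗ μ.flip ((B2 p).right q)) a := by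
              rw [sum_counit_smul ra]
            simp only [map_sum, map_smul, LinearMap.coe_comp, Function.comp_apply,
              LinearMap.flip_apply] at hlin
            exact hlin
    rw [Finset.sum_congr rfl fun p _ => Finset.sum_congr rfl fun q _ => hfix p q]
    have key := Coalgebra.sum_map_tmul_tmul_eq (R := k)
      (S) (LinearMap.id) (S ∘ₗ μ a) b (repr := rb) (a₁ := B1) (a₂ := B2)
    have key2 := congrArg
      (fun t => (TensorProduct.lift μ) (((TensorProduct.lift μ).lTensor H') t)) key
    simp only [map_sum, LinearMap.lTensor_tmul, TensorProduct.lift.tmul,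
      LinearMap.id_coe, id_eq, LinearMap.coe_comp, Function.comp_apply] at key2
    rw [key2]
    calc
      (∑ p ∈ rb.index, ∑ q ∈ (B1 p).index,
        μ (S ((B1 p).left q)) (μ ((B1 p).right q) (S (μ a (rb.right p)))))
        = ∑ p ∈ rb.index,
            Coalgebra.counit (R := k) (rb.left p) • S (μ a (rb.right p)) := by
          refine Finset.sum_congr rfl fun p _ => ?_
          rw [show (∑ q ∈ (B1 p).index,
              μ (S ((B1 p).left q)) (μ ((B1 p).right q) (S (μ a (rb.right p)))))
              = μ (∑ q ∈ (B1 p).index, μ (S ((B1 p).left q)) ((B1 p).right q))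
                  (S (μ a (rb.right p))) from by
            rw [map_sum, LinearMap.sum_apply]
            refine Finset.sum_congr rfl fun q _ => ?_
            simp only [hμ.assoc]]
          rw [hcolB p, map_smul, LinearMap.smul_apply, hμ.one_left]
      _ = S (μ a b) := by
          have hlin : (S ∘ₗ μ a)
                (∑ p ∈ rb.index, Coalgebra.counit (R := k) (rb.left p) • rb.right p)
              = (S ∘ₗ μ a) b := by rw [sum_counit_smul rb]
          simp only [map_sum, map_smul, LinearMap.coe_comp, Function.comp_apply] at hlin
          exact hlin
  rw [← hEB, hEA]

end Aux

end Antimult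


section Final

open Coalgebra LinearMap

variable {k : Type*} [Field k] {H : Type*} [Ring H] [Bialgebra k H] (G : BialgGrading k H)

namespace Aux

lemma conv_inv_one {μ : H →ₗ[k] H →ₗ[k] H} (hμ : IsConvMul μ) {S : H →ₗ[k] H}
    (hSl : conv μ S LinearMap.id = cunit) : S 1 = 1 := by
  have h : conv μ S LinearMap.id (1 : H) = cunit (k := k) (1 : H) := by rw [hSl]
  rw [conv_apply, Bialgebra.comul_one] at h
  simp only [Algebra.TensorProduct.one_def] at h
  rw [TensorProduct.map_tmul, TensorProduct.lift.tmul] at h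
  simpa [hμ.one_right, cunit_apply, Bialgebra.counit_one] using h

lemma proj_of_mem {x : H} (hx : x ∈ G.grade 0) : proj G 0 x = x :=
  proj_coe_same G 0 ⟨x, hx⟩

/-- The global antipode agrees with the local one in degree zero. -/
lemma S_eq_s_on0 (s : H →ₗ[k] H) (hanti : IsAntipodeOn k s (G.grade 0))
    {S : H →ₗ[k] H}
    (hSl : conv (LinearMap.mul k H) S LinearMap.id = cunit)
    {x : H} (hx : x ∈ G.grade 0) : S x = s x := by
  classical
  let r : Coalgebra.Repr k x (↥(G.grade 0) × ↥(G.grade 0)) := repr0 G hx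
  let L1 : (i : (↥(G.grade 0) × ↥(G.grade 0))) → Coalgebra.Repr k (r.left i) (H × H) :=
    fun i => Coalgebra.Repr.arbitrary k (r.left i)
  let R2 : (i : (↥(G.grade 0) × ↥(G.grade 0))) → Coalgebra.Repr k (r.right i) (H × H) :=
    fun i => Coalgebra.Repr.arbitrary k (r.right i)
  -- step 1 : `S x = ∑ ε(r_i) • S(l_i)`
  have h1 : S x = ∑ i ∈ r.index, Coalgebra.counit (R := k) (r.right i) • S (r.left i) := by
    conv_lhs => rw [← sum_smul_counit r]
    rw [map_sum]
    exact Finset.sum_congr rfl fun i _ => map_smul S _ _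
  -- step 2 : for each `i`, `ε(r.right i) • 1 = ∑_j (R2 i).left j * s ((R2 i).right j)`
  have h2 : ∀ i : (↥(G.grade 0) × ↥(G.grade 0)), (Coalgebra.counit (R := k) (r.right i)) • (1 : H)
      = ∑ j ∈ (R2 i).index, (R2 i).left j * s ((R2 i).right j) := by
    intro i
    have h := (hanti (r.right i) (repr0_right_mem G hx i)).2
    rw [← (R2 i).eq, map_sum, map_sum] at h
    simpa using h.symm
  -- step 3 : quadruple expression
  have h3 : S x = ∑ i ∈ r.index, ∑ j ∈ (R2 i).index,
      S (r.left i) * ((R2 i).left j * s ((R2 i).right j)) := by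
    rw [h1]
    refine Finset.sum_congr rfl fun i _ => ?_
    rw [show (Coalgebra.counit (R := k) (r.right i)) • S (r.left i)
        = S (r.left i) * ((Coalgebra.counit (R := k) (r.right i)) • (1 : H)) from by
      rw [mul_smul_comm, mul_one]]
    rw [h2 i, Finset.mul_sum]
  -- step 4 : coassociativity switch
  have key := Coalgebra.sum_map_tmul_tmul_eq (R := k) S LinearMap.id s x
    (repr := r) (a₁ := L1) (a₂ := R2)
  have key2 := congrArg
    (fun t => (LinearMap.mul' k H) (((LinearMap.mul' k H).lTensor H) t)) key
  simp only [map_sum, LinearMap.lTensor_tmul, LinearMap.mul'_apply,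
    LinearMap.id_coe, id_eq] at key2
  rw [h3, key2]
  -- step 5 : collapse using the global antipode property
  have h5 : ∀ i : (↥(G.grade 0) × ↥(G.grade 0)), (∑ j ∈ (L1 i).index,
      S ((L1 i).left j) * ((L1 i).right j * s (r.right i)))
      = Coalgebra.counit (R := k) (r.left i) • s (r.right i) := by
    intro i
    have hcol : ∑ j ∈ (L1 i).index, S ((L1 i).left j) * (L1 i).right j
        = Coalgebra.counit (R := k) (r.left i) • 1 := by
      have h : conv (LinearMap.mul k H) S LinearMap.id (r.left i)
          = cunit (k := k) (r.left i) := by rw [hSl]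
      rw [conv_repr _ _ _ (L1 i), cunit_apply] at h
      simpa [LinearMap.mul_apply'] using h
    calc (∑ j ∈ (L1 i).index, S ((L1 i).left j) * ((L1 i).right j * s (r.right i)))
        = (∑ j ∈ (L1 i).index, S ((L1 i).left j) * (L1 i).right j) * s (r.right i) := by
          rw [Finset.sum_mul]
          exact Finset.sum_congr rfl fun j _ => (mul_assoc _ _ _).symm
      _ = Coalgebra.counit (R := k) (r.left i) • s (r.right i) := by
          rw [hcol, smul_mul_assoc, one_mul]
  rw [Finset.sum_congr rfl fun i _ => h5 i]
  have hlin : (s ∘ₗ LinearMap.id)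
      (∑ i ∈ r.index, Coalgebra.counit (R := k) (r.left i) • r.right i)
      = (s ∘ₗ LinearMap.id) x := by rw [sum_counit_smul r]
  simp only [map_sum, map_smul, LinearMap.coe_comp, Function.comp_apply,
    LinearMap.id_coe, id_eq] at hlin
  exact hlin

lemma s_one (s : H →ₗ[k] H) (hanti : IsAntipodeOn k s (G.grade 0)) : s 1 = 1 := by
  have h := (hanti 1 G.one_mem).1
  rw [Bialgebra.comul_one] at h
  simp only [Algebra.TensorProduct.one_def] at h
  rw [TensorProduct.map_tmul] at h
  simpa [Bialgebra.counit_one] using h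

/-- The seed property for `s'` with respect to the flipped multiplication. -/
lemma seed_flip (s s' : H →ₗ[k] H)
    (hs'0 : ∀ x ∈ G.grade 0, s' x ∈ G.grade 0)
    (hanti : IsAntipodeOn k s (G.grade 0))
    (hinv : ∀ x ∈ G.grade 0, s' (s x) = x ∧ s (s' x) = x)
    (hsanti : ∀ a b : H, a ∈ G.grade 0 → b ∈ G.grade 0 → s (a * b) = s b * s a) :
    conv (LinearMap.mul k H).flip (s' ∘ₗ proj G 0) (proj G 0) = cunit ∧
    conv (LinearMap.mul k H).flip (proj G 0) (s' ∘ₗ proj G 0) = cunit := by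
  have hs'1 : s' 1 = 1 := by
    have := (hinv 1 G.one_mem).1
    rwa [s_one G s hanti] at this
  constructor
  · apply conv_seed_left G _ s'
    intro a
    rw [conv_repr _ _ _ (repr0 G a.2)]
    have hterm : ∀ i ∈ (repr0 G a.2).index,
        ((LinearMap.mul k H).flip ((s' ∘ₗ proj G 0) ((repr0 G a.2).left i)))
          ((proj G 0) ((repr0 G a.2).right i))
        = (repr0 G a.2).right i * s' ((repr0 G a.2).left i) := by
      intro i _
      rw [LinearMap.flip_apply, LinearMap.mul_apply', LinearMap.comp_apply,
        proj_of_mem G (repr0_left_mem G a.2 i), proj_of_mem G (repr0_right_mem G a.2 i)]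
    rw [Finset.sum_congr rfl hterm]
    set z : H := ∑ i ∈ (repr0 G a.2).index,
      (repr0 G a.2).right i * s' ((repr0 G a.2).left i) with hz
    have hzmem : z ∈ G.grade 0 := by
      rw [hz]
      exact Submodule.sum_mem _ fun i _ =>
        G.mul_mem 0 0 _ (repr0_right_mem G a.2 i) _ (hs'0 _ (repr0_left_mem G a.2 i))
    have hsz : s z = Coalgebra.counit (R := k) (a : H) • 1 := by
      rw [hz, map_sum]
      have hterm2 : ∀ i ∈ (repr0 G a.2).index,
          s ((repr0 G a.2).right i * s' ((repr0 G a.2).left i))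
          = (repr0 G a.2).left i * s ((repr0 G a.2).right i) := by
        intro i _
        rw [hsanti _ _ (repr0_right_mem G a.2 i) (hs'0 _ (repr0_left_mem G a.2 i)),
          (hinv _ (repr0_left_mem G a.2 i)).2]
      rw [Finset.sum_congr rfl hterm2]
      have h := (hanti (a : H) a.2).2
      rw [← (repr0 G a.2).eq, map_sum, map_sum] at h
      simpa using h
    have := (hinv z hzmem).1
    rw [hsz] at this
    rw [← this, map_smul, hs'1]
  · apply conv_seed_right G _ s'
    intro a
    rw [conv_repr _ _ _ (repr0 G a.2)]
    have hterm : ∀ i ∈ (repr0 G a.2).index,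
        ((LinearMap.mul k H).flip ((proj G 0) ((repr0 G a.2).left i)))
          ((s' ∘ₗ proj G 0) ((repr0 G a.2).right i))
        = s' ((repr0 G a.2).right i) * (repr0 G a.2).left i := by
      intro i _
      rw [LinearMap.flip_apply, LinearMap.mul_apply', LinearMap.comp_apply,
        proj_of_mem G (repr0_left_mem G a.2 i), proj_of_mem G (repr0_right_mem G a.2 i)]
    rw [Finset.sum_congr rfl hterm]
    set z : H := ∑ i ∈ (repr0 G a.2).index,
      s' ((repr0 G a.2).right i) * (repr0 G a.2).left i with hz
    have hzmem : z ∈ G.grade 0 := by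
      rw [hz]
      exact Submodule.sum_mem _ fun i _ =>
        G.mul_mem 0 0 _ (hs'0 _ (repr0_right_mem G a.2 i)) _ (repr0_left_mem G a.2 i)
    have hsz : s z = Coalgebra.counit (R := k) (a : H) • 1 := by
      rw [hz, map_sum]
      have hterm2 : ∀ i ∈ (repr0 G a.2).index,
          s (s' ((repr0 G a.2).right i) * (repr0 G a.2).left i)
          = s ((repr0 G a.2).left i) * (repr0 G a.2).right i := by
        intro i _
        rw [hsanti _ _ (hs'0 _ (repr0_right_mem G a.2 i)) (repr0_left_mem G a.2 i),
          (hinv _ (repr0_right_mem G a.2 i)).2]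
      rw [Finset.sum_congr rfl hterm2]
      have h := (hanti (a : H) a.2).1
      rw [← (repr0 G a.2).eq, map_sum, map_sum] at h
      simpa using h
    have := (hinv z hzmem).1
    rw [hsz] at this
    rw [← this, map_smul, hs'1]

end Aux

end Final



/-- **Lemma 2.4 (i).**  If the degree-zero component `H₀` of a graded bialgebra `H` is
a Hopf algebra with invertible antipode, then `H` has an invertible antipode. -/
theorem graded_bialgebra_invertible_antipode (G : BialgGrading k H)
    (s s' : H →ₗ[k] H)
    (hs0 : ∀ x ∈ G.grade 0, s x ∈ G.grade 0)
    (hs'0 : ∀ x ∈ G.grade 0, s' x ∈ G.grade 0)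
    (hanti : IsAntipodeOn k s (G.grade 0))
    (hinv : ∀ x ∈ G.grade 0, s' (s x) = x ∧ s (s' x) = x) :
    ∃ S S' : H →ₗ[k] H,
      IsAntipodeOn k S ⊤ ∧ (∀ x : H, S' (S x) = x) ∧ (∀ x : H, S (S' x) = x) := by

  classical
  obtain ⟨S, hSl, hSr⟩ := Aux.exists_S G s hanti
  have hμm : Aux.IsConvMul (LinearMap.mul k H) := Aux.isConvMul_mul
  have hμf : Aux.IsConvMul (LinearMap.mul k H).flip := Aux.isConvMul_flip
  have hSanti : ∀ a b : H, S (a * b) = S b * S a := by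
    intro a b
    have := Aux.conv_antimult hμm (fun rx ry => Aux.hcm_mul rx ry) Aux.hce_mul S hSl hSr a b
    simpa [LinearMap.mul_apply'] using this
  have hS1 : S 1 = 1 := Aux.conv_inv_one hμm hSl
  have hsanti : ∀ a b : H, a ∈ G.grade 0 → b ∈ G.grade 0 → s (a * b) = s b * s a := by
    intro a b ha hb
    have hab : a * b ∈ G.grade 0 := by
      have := G.mul_mem 0 0 a ha b hb
      simpa using this
    rw [← Aux.S_eq_s_on0 G s hanti hSl hab, ← Aux.S_eq_s_on0 G s hanti hSl ha,
      ← Aux.S_eq_s_on0 G s hanti hSl hb, hSanti]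
  obtain ⟨hseedl, hseedr⟩ := Aux.seed_flip G s s' hs'0 hanti hinv hsanti
  obtain ⟨T, hTl, hTr⟩ :=
    Aux.exists_conv_inverse G hμf (s' ∘ₗ Aux.proj G 0) hseedl hseedr
  have hTanti : ∀ a b : H, T (b * a) = T a * T b := by
    intro a b
    have := Aux.conv_antimult hμf (fun rx ry => Aux.hcm_flip rx ry) Aux.hce_flip T hTl hTr a b
    simpa [LinearMap.flip_apply, LinearMap.mul_apply'] using this
  have hT1 : T 1 = 1 := Aux.conv_inv_one hμf hTl
  -- `S ∘ T = id`
  have hSTconv : Aux.conv (LinearMap.mul k H) (S ∘ₗ T) S = Aux.cunit := by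
    ext x
    rw [Aux.conv_repr _ _ _ (Coalgebra.Repr.arbitrary k x), Aux.cunit_apply]
    have hflip : ∑ i ∈ (Coalgebra.Repr.arbitrary k x).index,
        (Coalgebra.Repr.arbitrary k x).right i * T ((Coalgebra.Repr.arbitrary k x).left i)
        = Coalgebra.counit (R := k) x • 1 := by
      have h : Aux.conv (LinearMap.mul k H).flip T LinearMap.id x
          = Aux.cunit (k := k) x := by rw [hTl]
      rw [Aux.conv_repr _ _ _ (Coalgebra.Repr.arbitrary k x), Aux.cunit_apply] at h
      simpa [LinearMap.flip_apply, LinearMap.mul_apply'] using h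
    calc (∑ i ∈ (Coalgebra.Repr.arbitrary k x).index,
        (LinearMap.mul k H) ((S ∘ₗ T) ((Coalgebra.Repr.arbitrary k x).left i))
          (S ((Coalgebra.Repr.arbitrary k x).right i)))
        = ∑ i ∈ (Coalgebra.Repr.arbitrary k x).index,
            S ((Coalgebra.Repr.arbitrary k x).right i *
              T ((Coalgebra.Repr.arbitrary k x).left i)) := by
          refine Finset.sum_congr rfl fun i _ => ?_
          rw [LinearMap.mul_apply', LinearMap.comp_apply, hSanti]
      _ = S (∑ i ∈ (Coalgebra.Repr.arbitrary k x).index,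
            (Coalgebra.Repr.arbitrary k x).right i *
              T ((Coalgebra.Repr.arbitrary k x).left i)) := by rw [map_sum]
      _ = Coalgebra.counit (R := k) x • 1 := by rw [hflip, map_smul, hS1]
  have hST : S ∘ₗ T = LinearMap.id := by
    calc S ∘ₗ T = Aux.conv (LinearMap.mul k H) (S ∘ₗ T) Aux.cunit :=
          (Aux.conv_cunit_right hμm _).symm
      _ = Aux.conv (LinearMap.mul k H) (S ∘ₗ T)
            (Aux.conv (LinearMap.mul k H) S LinearMap.id) := by rw [hSl]
      _ = Aux.conv (LinearMap.mul k H)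
            (Aux.conv (LinearMap.mul k H) (S ∘ₗ T) S) LinearMap.id :=
          (Aux.conv_assoc hμm _ _ _).symm
      _ = Aux.conv (LinearMap.mul k H) Aux.cunit LinearMap.id := by rw [hSTconv]
      _ = LinearMap.id := Aux.conv_cunit_left hμm _
  -- `T ∘ S = id`
  have hTSconv : Aux.conv (LinearMap.mul k H).flip (T ∘ₗ S) T = Aux.cunit := by
    ext x
    rw [Aux.conv_repr _ _ _ (Coalgebra.Repr.arbitrary k x), Aux.cunit_apply]
    have hmul : ∑ i ∈ (Coalgebra.Repr.arbitrary k x).index,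
        S ((Coalgebra.Repr.arbitrary k x).left i) *
          (Coalgebra.Repr.arbitrary k x).right i
        = Coalgebra.counit (R := k) x • 1 := by
      have h : Aux.conv (LinearMap.mul k H) S LinearMap.id x
          = Aux.cunit (k := k) x := by rw [hSl]
      rw [Aux.conv_repr _ _ _ (Coalgebra.Repr.arbitrary k x), Aux.cunit_apply] at h
      simpa [LinearMap.mul_apply'] using h
    calc (∑ i ∈ (Coalgebra.Repr.arbitrary k x).index,
        ((LinearMap.mul k H).flip ((T ∘ₗ S) ((Coalgebra.Repr.arbitrary k x).left i)))
          (T ((Coalgebra.Repr.arbitrary k x).right i)))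
        = ∑ i ∈ (Coalgebra.Repr.arbitrary k x).index,
            T (S ((Coalgebra.Repr.arbitrary k x).left i) *
              (Coalgebra.Repr.arbitrary k x).right i) := by
          refine Finset.sum_congr rfl fun i _ => ?_
          rw [LinearMap.flip_apply, LinearMap.mul_apply', LinearMap.comp_apply, hTanti]
      _ = T (∑ i ∈ (Coalgebra.Repr.arbitrary k x).index,
            S ((Coalgebra.Repr.arbitrary k x).left i) *
              (Coalgebra.Repr.arbitrary k x).right i) := by rw [map_sum]
      _ = Coalgebra.counit (R := k) x • 1 := by rw [hmul, map_smul, hT1]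
  have hTS : T ∘ₗ S = LinearMap.id := by
    calc T ∘ₗ S = Aux.conv (LinearMap.mul k H).flip (T ∘ₗ S) Aux.cunit :=
          (Aux.conv_cunit_right hμf _).symm
      _ = Aux.conv (LinearMap.mul k H).flip (T ∘ₗ S)
            (Aux.conv (LinearMap.mul k H).flip T LinearMap.id) := by rw [hTl]
      _ = Aux.conv (LinearMap.mul k H).flip
            (Aux.conv (LinearMap.mul k H).flip (T ∘ₗ S) T) LinearMap.id :=
          (Aux.conv_assoc hμf _ _ _).symm
      _ = Aux.conv (LinearMap.mul k H).flip Aux.cunit LinearMap.id := by rw [hTSconv]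
      _ = LinearMap.id := Aux.conv_cunit_left hμf _
  refine ⟨S, T, ?_, ?_, ?_⟩
  · intro x _
    constructor
    · have h : Aux.conv (LinearMap.mul k H) S LinearMap.id x = Aux.cunit (k := k) x := by
        rw [hSl]
      rw [Aux.conv_apply, Aux.lift_mul_eq, Aux.cunit_apply] at h
      exact h
    · have h : Aux.conv (LinearMap.mul k H) LinearMap.id S x = Aux.cunit (k := k) x := by
        rw [hSr]
      rw [Aux.conv_apply, Aux.lift_mul_eq, Aux.cunit_apply] at h
      exact h
  · intro x
    have := LinearMap.congr_fun hTS x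
    simpa using this
  · intro x
    have := LinearMap.congr_fun hST x
    simpa using this

end LQTPaper
end
end
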